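/- Let l be a nonnegative integer and m ∈ ℤ. Define ₁F₁(a; b; z) = Σ_{n=0}^∞ ((a)_n / (b)_n) zⁿ/n!, Ψ_{m,l}(θ,y) = e^{−i m θ/2} e^{−y²/2} y^l · ₁F₁( (1 + 2l − m)/4 ; l + 1/2 ; y² ), and for smooth F : ℝ² → ℂ define the raising operator (η⁺ F)(θ,y) = (1/2) e^{−2iθ} ( −y ∂_y F(θ,y) − i ∂_θ F(θ,y) + (y² − 1/2) F(θ,y) ). Then for all (θ,y) ∈ ℝ²: (η⁺ Ψ_{m,l})(θ,y) = −((2l + 1 + m)/4) · Ψ_{m+4,l}(θ,y). In particular η⁺ annihilates Ψ_{−(2l+1),l}(θ,y) = e^{i(2l+1)θ/2} e^{y²/2} y^l, the highest weight vector. -/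

import Mathlib

open Complex

/-- The confluent hypergeometric function
`₁F₁(a;b;z) = Σ_{n≥0} ((a)_n/(b)_n) zⁿ/n!` (Pochhammer rising factorials). -/
noncomputable def oneFone (a b z : ℂ) : ℂ :=
  ∑' n : ℕ, ((ascPochhammer ℂ n).eval a / (ascPochhammer ℂ n).eval b) * z ^ n
    / (n.factorial : ℂ)

/-- The weight-`m` `K`-finite vector
`Ψ_{m,l}(θ,y) = e^{-imθ/2} e^{-y²/2} y^l ₁F₁((1+2l-m)/4; l+1/2; y²)`. -/
noncomputable def Psi (m : ℤ) (l : ℕ) (θ y : ℝ) : ℂ :=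
  Complex.exp (-I * (m : ℂ) * (θ : ℂ) / 2) * Complex.exp (-(y : ℂ) ^ 2 / 2)
    * (y : ℂ) ^ l
    * oneFone ((1 + 2 * (l : ℂ) - (m : ℂ)) / 4) ((l : ℂ) + 1/2) ((y : ℂ) ^ 2)

/-- Partial derivative in the first variable `θ`. -/
noncomputable def pderivT (F : ℝ → ℝ → ℂ) (θ y : ℝ) : ℂ := deriv (fun θ' => F θ' y) θ

/-- Partial derivative in the second variable `y`. -/
noncomputable def pderivY (F : ℝ → ℝ → ℂ) (θ y : ℝ) : ℂ := deriv (fun y' => F θ y') y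

/-- The raising operator
`(η⁺F)(θ,y) = (1/2) e^{-2iθ} (-y ∂_yF - i ∂_θF + (y² - 1/2) F)`. -/
noncomputable def etaPlus (F : ℝ → ℝ → ℂ) (θ y : ℝ) : ℂ :=
  (1/2 : ℂ) * Complex.exp (-2 * I * (θ : ℂ))
    * (-(y : ℂ) * pderivY F θ y - I * pderivT F θ y
        + ((y : ℂ) ^ 2 - 1/2) * F θ y)

noncomputable def pocq (a : ℂ) (n : ℕ) : ℂ := (ascPochhammer ℂ n).eval a

lemma pocq_zero (a : ℂ) : pocq a 0 = 1 := by simp [pocq]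

lemma pocq_succ (a : ℂ) (n : ℕ) : pocq a (n+1) = pocq a n * (a + n) := by
  simp [pocq, ascPochhammer_succ_right]

lemma bplus_ne (l : ℕ) (k : ℕ) : ((l:ℂ) + 1/2 + (k:ℂ)) ≠ 0 := by
  intro h
  have := congrArg Complex.re h
  simp [Complex.add_re] at this
  norm_num at this
  nlinarith [this, (Nat.cast_nonneg (α := ℝ) l), (Nat.cast_nonneg (α := ℝ) k)]

lemma pocqb_ne (l : ℕ) (n : ℕ) : pocq ((l:ℂ)+1/2) n ≠ 0 := by
  induction n with
  | zero => simp [pocq_zero]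
  | succ n ih => rw [pocq_succ]; exact mul_ne_zero ih (bplus_ne l n)

lemma norm_bplus (l n : ℕ) : ‖((l:ℂ) + 1/2 + (n:ℂ))‖ = (l:ℝ) + 1/2 + n := by
  have : ((l:ℂ) + 1/2 + (n:ℂ)) = (((l:ℝ) + 1/2 + (n:ℝ) : ℝ) : ℂ) := by push_cast; ring
  rw [this, Complex.norm_real, Real.norm_eq_abs, abs_of_pos]
  positivity

lemma norm_ratio_le (a : ℂ) (l : ℕ) (n : ℕ) :
    ‖pocq a n / pocq ((l:ℂ)+1/2) n‖ ≤ (2*(‖a‖+1))^n := by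
  induction n with
  | zero => simp [pocq_zero]
  | succ n ih =>
    have hb := pocqb_ne l n
    have hbn := bplus_ne l n
    have key : pocq a (n+1) / pocq ((l:ℂ)+1/2) (n+1)
        = (pocq a n / pocq ((l:ℂ)+1/2) n) * ((a + n) / ((l:ℂ)+1/2+n)) := by
      rw [pocq_succ, pocq_succ]; field_simp
    rw [key, norm_mul, pow_succ]
    have h2 : ‖(a + (n:ℂ)) / ((l:ℂ)+1/2+(n:ℂ))‖ ≤ 2*(‖a‖+1) := by
      rw [norm_div, norm_bplus]
      rw [div_le_iff₀ (by positivity)]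
      have : ‖a + (n:ℂ)‖ ≤ ‖a‖ + n := by
        simpa using norm_add_le a (n:ℂ)
      have hn : (n:ℝ) + 1/2 ≤ (l:ℝ) + 1/2 + n := by
        have : (0:ℝ) ≤ l := Nat.cast_nonneg l
        linarith
      nlinarith [norm_nonneg a, (Nat.cast_nonneg (α := ℝ) n)]
    exact mul_le_mul ih h2 (norm_nonneg _) (by positivity)

lemma pocq_succ_left (a : ℂ) (n : ℕ) : pocq a (n+1) = a * pocq (a+1) n := by
  simp [pocq, ascPochhammer_succ_left, Polynomial.eval_comp, Polynomial.eval_mul]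

lemma oneFone_eq (a b z : ℂ) :
    oneFone a b z = ∑' n : ℕ, pocq a n / pocq b n * z^n / n.factorial := rfl

lemma summable_master (K : ℝ) (hK : 0 ≤ K) :
    Summable (fun n : ℕ => ((n:ℝ)+1) * K^n / n.factorial) := by
  refine Summable.of_nonneg_of_le (fun n => by positivity) (fun n => ?_)
    (Real.summable_pow_div_factorial (2*K))
  have h1 : ((n:ℝ)+1) ≤ 2^n := by
    have := Nat.lt_two_pow_self (n := n)
    have : (n:ℝ) + 1 ≤ ((2^n : ℕ) : ℝ) := by exact_mod_cast this
    simpa using this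
  rw [mul_pow, div_le_div_iff_of_pos_right (by positivity : (0:ℝ) < n.factorial)]
  exact mul_le_mul_of_nonneg_right h1 (by positivity)

lemma norm_term_le (a : ℂ) (l : ℕ) (z : ℂ) (n : ℕ) :
    ‖pocq a n / pocq ((l:ℂ)+1/2) n * z^n / n.factorial‖
      ≤ (2*(‖a‖+1)*‖z‖)^n / n.factorial := by
  rw [norm_div, norm_mul, norm_pow, Complex.norm_natCast, mul_pow, mul_pow]
  apply div_le_div_of_nonneg_right _ (by positivity)
  have := norm_ratio_le a l n
  apply mul_le_mul_of_nonneg_right _ (by positivity)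
  calc ‖pocq a n / pocq ((l:ℂ)+1/2) n‖ ≤ (2*(‖a‖+1))^n := this
    _ = 2^n * (‖a‖+1)^n := by rw [mul_pow]

lemma summable_S1 (a : ℂ) (l : ℕ) (z : ℂ) :
    Summable (fun n : ℕ => pocq a n / pocq ((l:ℂ)+1/2) n * z^n / n.factorial) := by
  apply Summable.of_norm
  refine Summable.of_nonneg_of_le (fun n => norm_nonneg _)
    (fun n => (norm_term_le a l z n).trans ?_)
    (summable_master (2*(‖a‖+1)*‖z‖) (by positivity))
  apply div_le_div_of_nonneg_right _ (by positivity)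
  nlinarith [pow_nonneg (by positivity : (0:ℝ) ≤ 2*(‖a‖+1)*‖z‖) n]

lemma summable_S2 (a : ℂ) (l : ℕ) (z : ℂ) :
    Summable (fun n : ℕ => (n:ℂ) * (pocq a n / pocq ((l:ℂ)+1/2) n * z^n / n.factorial)) := by
  apply Summable.of_norm
  refine Summable.of_nonneg_of_le (fun n => norm_nonneg _) (fun n => ?_)
    (summable_master (2*(‖a‖+1)*‖z‖) (by positivity))
  rw [norm_mul, Complex.norm_natCast]
  calc (n:ℝ) * ‖pocq a n / pocq ((l:ℂ)+1/2) n * z^n / n.factorial‖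
      ≤ ((n:ℝ)+1) * ((2*(‖a‖+1)*‖z‖)^n / n.factorial) := by
        apply mul_le_mul (by linarith) (norm_term_le a l z n) (norm_nonneg _) (by positivity)
    _ = ((n:ℝ)+1) * (2*(‖a‖+1)*‖z‖)^n / n.factorial := by ring

lemma hasSum_key (a : ℂ) (l : ℕ) (z : ℂ) :
    HasSum (fun n : ℕ =>
      ((n:ℂ) + ((l:ℂ)+1/2) - a) * (pocq a n / pocq ((l:ℂ)+1/2) n * z^n / n.factorial)
      - (((l:ℂ)+1/2) - a) * (pocq (a-1) n / pocq ((l:ℂ)+1/2) n * z^n / n.factorial))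
      (z * ∑' n:ℕ, pocq a n / pocq ((l:ℂ)+1/2) n * z^n / n.factorial) := by
  set b : ℂ := (l:ℂ)+1/2 with hb
  set h : ℕ → ℂ := fun n =>
      ((n:ℂ) + b - a) * (pocq a n / pocq b n * z^n / n.factorial)
      - (b - a) * (pocq (a-1) n / pocq b n * z^n / n.factorial) with hh
  have h0 : h 0 = 0 := by
    simp [hh, pocq_zero]
  have hstep : ∀ n : ℕ, h (n+1) = z * (pocq a n / pocq b n * z^n / n.factorial) := by
    intro n
    have e1 : pocq (a-1) (n+1) = (a-1) * pocq a n := by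
      rw [pocq_succ_left]; ring_nf
    have e2 : pocq a (n+1) = pocq a n * (a + n) := pocq_succ a n
    have e3 : pocq b (n+1) = pocq b n * (b + n) := pocq_succ b n
    have hBn : pocq b n ≠ 0 := pocqb_ne l n
    have hbn : (b + (n:ℂ)) ≠ 0 := bplus_ne l n
    have hfac : ((n.factorial : ℂ)) ≠ 0 := by
      exact_mod_cast Nat.cast_ne_zero.mpr (Nat.factorial_ne_zero n)
    have hfacs : (((n+1).factorial : ℂ)) = (n+1) * n.factorial := by
      rw [Nat.factorial_succ]; push_cast; ring
    simp only [hh, e1, e2, e3, hfacs]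
    have hn1 : ((n:ℂ)+1) ≠ 0 := Nat.cast_add_one_ne_zero n
    push_cast
    field_simp
    ring
  have hS : HasSum (fun n => h (n+1))
      (z * ∑' n:ℕ, pocq a n / pocq b n * z^n / n.factorial) := by
    have H := ((summable_S1 a l z).hasSum.mul_left z)
    have e : (fun n => h (n+1))
        = fun n => z * (pocq a n / pocq b n * z^n / n.factorial) := funext hstep
    rw [e]; exact H
  have := (hasSum_nat_add_iff (f := h) 1).mp hS
  rw [Finset.range_one, Finset.sum_singleton, h0, add_zero] at this
  exact this

lemma hasDerivAt_oneFone_sq (a : ℂ) (l : ℕ) (y : ℝ) :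
    HasDerivAt (fun y' : ℝ => oneFone a ((l:ℂ)+1/2) ((y':ℂ)^2))
      (∑' n : ℕ, pocq a n / pocq ((l:ℂ)+1/2) n * ((2*(n:ℂ)) * (y:ℂ)^(2*n-1)) / n.factorial) y := by
  set b : ℂ := (l:ℂ)+1/2 with hbdef
  set R : ℝ := |y| + 1 with hR
  have hR1 : (1:ℝ) ≤ R := by rw [hR]; linarith [abs_nonneg y]
  set g : ℕ → ℝ → ℂ := fun n y' => pocq a n / pocq b n * (y':ℂ)^(2*n) / n.factorial with hg
  set g' : ℕ → ℝ → ℂ := fun n y' =>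
    pocq a n / pocq b n * ((2*(n:ℂ)) * (y':ℂ)^(2*n-1)) / n.factorial with hg'
  set u : ℕ → ℝ := fun n => 2 * (4*(‖a‖+1)*R^2)^n / n.factorial with hu
  have hu_summable : Summable u := by
    simpa [hu, mul_div_assoc] using (Real.summable_pow_div_factorial (4*(‖a‖+1)*R^2)).mul_left 2
  have hderiv : ∀ n : ℕ, ∀ y' : ℝ, HasDerivAt (g n) (g' n y') y' := by
    intro n y'
    have h1 : HasDerivAt (fun x : ℂ => x^(2*n)) ((2*n : ℕ) * (y':ℂ)^(2*n-1)) (y':ℂ) :=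
      hasDerivAt_pow (2*n) _
    have h2 := h1.comp_ofReal
    have h3 := (h2.const_mul (pocq a n / pocq b n)).div_const (n.factorial : ℂ)
    convert h3 using 1
    rfl
    push_cast
    ring
  have hbound : ∀ n : ℕ, ∀ y' : ℝ, y' ∈ Set.Ioo (-R) R → ‖g' n y'‖ ≤ u n := by
    intro n y' hy'
    have hy'R : |y'| ≤ R := by
      rw [abs_le]; exact ⟨hy'.1.le, hy'.2.le⟩
    have h0R : (0:ℝ) < R := by positivity
    rw [hg']
    simp only [norm_div, norm_mul, Complex.norm_natCast, norm_pow, Complex.norm_ofNat]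
    have hcy : ‖(y':ℂ)‖ = |y'| := by rw [Complex.norm_real, Real.norm_eq_abs]
    rw [hcy]
    apply div_le_div_of_nonneg_right _ (by positivity)
    have e2 : |y'|^(2*n-1) ≤ R^(2*n) := by
      calc |y'|^(2*n-1) ≤ R^(2*n-1) := pow_le_pow_left₀ (abs_nonneg y') hy'R _
        _ ≤ R^(2*n) := pow_le_pow_right₀ hR1 (by omega)
    have e3 : (n:ℝ) ≤ 2^n := by
      have := Nat.lt_two_pow_self (n := n)
      exact_mod_cast this.le
    rw [← norm_div]
    calc ‖pocq a n / pocq b n‖ * (2*(n:ℝ) * |y'|^(2*n-1))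
        ≤ (2*(‖a‖+1))^n * (2 * 2^n * R^(2*n)) := by
          apply mul_le_mul (norm_ratio_le a l n) _ (by positivity) (by positivity)
          have : 2*(n:ℝ) * |y'|^(2*n-1) ≤ 2*2^n * R^(2*n) := by
            apply mul_le_mul _ e2 (by positivity) (by positivity)
            nlinarith
          exact this
      _ = 2 * (4*(‖a‖+1)*R^2)^n := by
          rw [pow_mul]
          rw [show (4*(‖a‖+1)*R^2)^n = (2*(‖a‖+1))^n * 2^n * (R^2)^n by
            rw [← mul_pow, ← mul_pow]; ring_nf]
          ring
  have hsum0 : Summable (fun n => g n y) := by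
    have := summable_S1 a l ((y:ℂ)^2)
    apply this.congr
    intro n
    rw [hg]
    simp only [← pow_mul]
    rfl
  have hmem : y ∈ Set.Ioo (-R) R := by
    constructor <;> [skip; skip] <;> cases' abs_lt.mp (show |y| < R by rw [hR]; linarith) with h1 h2
    · exact h1
    · exact h2
  have key := hasDerivAt_tsum_of_isPreconnected hu_summable isOpen_Ioo
    (isPreconnected_Ioo) (fun n y' _ => hderiv n y') hbound hmem hsum0 hmem
  have efun : (fun y' : ℝ => ∑' n, g n y') = fun y' : ℝ => oneFone a b ((y':ℂ)^2) := by
    funext y'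
    rw [oneFone_eq]
    apply tsum_congr
    intro n
    rw [hg]
    simp only [← pow_mul]
  rw [efun] at key
  exact key

lemma tsum_F1 (a : ℂ) (l : ℕ) (z : ℂ) :
    (∑' n:ℕ, (n:ℂ) * (pocq a n / pocq ((l:ℂ)+1/2) n * z^n / n.factorial))
      = z * (∑' n:ℕ, pocq a n / pocq ((l:ℂ)+1/2) n * z^n / n.factorial)
        - (((l:ℂ)+1/2) - a) * (∑' n:ℕ, pocq a n / pocq ((l:ℂ)+1/2) n * z^n / n.factorial)
        + (((l:ℂ)+1/2) - a) * (∑' n:ℕ, pocq (a-1) n / pocq ((l:ℂ)+1/2) n * z^n / n.factorial) := by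
  set b : ℂ := (l:ℂ)+1/2
  have hK := hasSum_key a l z
  have hG : HasSum (fun n : ℕ => (b - a) * (pocq (a-1) n / pocq b n * z^n / n.factorial))
      ((b - a) * ∑' n:ℕ, pocq (a-1) n / pocq b n * z^n / n.factorial) :=
    (summable_S1 (a-1) l z).hasSum.mul_left _
  have h1 := hK.add hG
  have h1' : HasSum (fun n : ℕ => ((n:ℂ) + b - a) * (pocq a n / pocq b n * z^n / n.factorial))
      (z * (∑' n:ℕ, pocq a n / pocq b n * z^n / n.factorial)
        + (b - a) * ∑' n:ℕ, pocq (a-1) n / pocq b n * z^n / n.factorial) := by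
    convert h1 using 2 with n
    ring
  have hF : HasSum (fun n : ℕ => (b - a) * (pocq a n / pocq b n * z^n / n.factorial))
      ((b - a) * ∑' n:ℕ, pocq a n / pocq b n * z^n / n.factorial) :=
    (summable_S1 a l z).hasSum.mul_left _
  have h2 := h1'.sub hF
  have h2' : HasSum (fun n : ℕ => (n:ℂ) * (pocq a n / pocq b n * z^n / n.factorial))
      (z * (∑' n:ℕ, pocq a n / pocq b n * z^n / n.factorial)
        - (b - a) * (∑' n:ℕ, pocq a n / pocq b n * z^n / n.factorial)
        + (b - a) * ∑' n:ℕ, pocq (a-1) n / pocq b n * z^n / n.factorial) := by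
    convert h2 using 1
    · rfl
    · funext n; ring
    · ring
  exact h2'.tsum_eq

lemma y_mul_D (a : ℂ) (l : ℕ) (y : ℝ) :
    (y:ℂ) * (∑' n:ℕ, pocq a n / pocq ((l:ℂ)+1/2) n * ((2*(n:ℂ)) * (y:ℂ)^(2*n-1)) / n.factorial)
      = 2 * ∑' n:ℕ, (n:ℂ) * (pocq a n / pocq ((l:ℂ)+1/2) n * ((y:ℂ)^2)^n / n.factorial) := by
  rw [← tsum_mul_left, ← tsum_mul_left]
  apply tsum_congr
  intro n
  match n with
  | 0 => simp
  | (n+1) =>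
    have hpow : (y:ℂ) * (y:ℂ)^(2*(n+1)-1) = ((y:ℂ)^2)^(n+1) := by
      rw [show 2*(n+1)-1 = 2*n+1 from by omega]
      ring
    push_cast
    linear_combination (2 * ((n:ℂ)+1) * (pocq a (n+1) / pocq ((l:ℂ)+1/2) (n+1))
      / ((n+1).factorial : ℂ)) * hpow

lemma oneFone_bb (l : ℕ) (z : ℂ) :
    oneFone ((l:ℂ)+1/2) ((l:ℂ)+1/2) z = Complex.exp z := by
  rw [oneFone_eq, Complex.exp_eq_exp_ℂ, NormedSpace.exp_eq_tsum_div]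
  apply tsum_congr
  intro n
  rw [div_self (pocqb_ne l n), one_mul]

lemma Psi_hw (l : ℕ) (θ y : ℝ) :
    Psi (-(2 * (l : ℤ) + 1)) l θ y
      = Complex.exp (I * (2 * (l : ℂ) + 1) * (θ : ℂ) / 2)
          * Complex.exp ((y : ℂ) ^ 2 / 2) * (y : ℂ) ^ l := by
  rw [Psi]
  push_cast
  rw [show (1 + 2 * (l:ℂ) - -(2 * (l:ℂ) + 1)) / 4 = (l:ℂ) + 1/2 by ring]
  rw [oneFone_bb]
  rw [show -I * -(2 * (l:ℂ) + 1) * (θ:ℂ) / 2 = I * (2 * (l:ℂ) + 1) * (θ:ℂ) / 2 by ring]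
  have h : Complex.exp (-(y:ℂ)^2/2) * Complex.exp ((y:ℂ)^2) = Complex.exp ((y:ℂ)^2/2) := by
    rw [← Complex.exp_add]
    ring_nf
  linear_combination (Complex.exp (I * (2 * (l:ℂ) + 1) * (θ:ℂ) / 2) * (y:ℂ)^l) * h
-- main computation
lemma etaPlus_eq (l : ℕ) (m : ℤ) (θ y : ℝ) :
    etaPlus (Psi m l) θ y
      = -((2 * (l : ℂ) + 1 + (m : ℂ)) / 4) * Psi (m + 4) l θ y := by
  set b : ℂ := (l:ℂ) + 1/2 with hbdef
  set a : ℂ := (1 + 2 * (l : ℂ) - (m : ℂ)) / 4 with hadef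
  set z : ℂ := (y:ℂ)^2 with hzdef
  set E : ℂ := Complex.exp (-I * (m : ℂ) * (θ : ℂ) / 2) with hEdef
  set X : ℂ := Complex.exp (-(y : ℂ) ^ 2 / 2) with hXdef
  set Y : ℂ := (y : ℂ) ^ l with hYdef
  set Φ : ℂ := oneFone a b z with hPhidef
  set G : ℂ := oneFone (a-1) b z with hGdef
  set D : ℂ := ∑' n : ℕ, pocq a n / pocq b n * ((2*(n:ℂ)) * (y:ℂ)^(2*n-1)) / n.factorial with hDdef
  set F1 : ℂ := ∑' n:ℕ, (n:ℂ) * (pocq a n / pocq b n * z^n / n.factorial) with hF1def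
  set e2 : ℂ := Complex.exp (-2 * I * (θ : ℂ)) with he2def
  -- θ-derivative
  have hT : pderivT (Psi m l) θ y = (-I * (m:ℂ) / 2) * (E * (X * Y * Φ)) := by
    have hfun : (fun θ' : ℝ => Psi m l θ' y)
        = fun θ' : ℝ => Complex.exp (-I * (m : ℂ) * (θ' : ℂ) / 2) * (X * Y * Φ) := by
      funext θ'
      rw [Psi, hXdef, hYdef, hPhidef, hadef, hbdef, hzdef]
      ring
    have h1 : HasDerivAt (fun w : ℂ => Complex.exp (-I * (m : ℂ) * w / 2))
        (Complex.exp (-I * (m:ℂ) * (θ:ℂ) / 2) * (-I * (m:ℂ) / 2)) (θ:ℂ) := by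
      have := (((hasDerivAt_id ((θ:ℂ))).const_mul (-I * (m:ℂ))).div_const 2).cexp
      simpa using this
    have h2 := (h1.comp_ofReal).mul_const (X * Y * Φ)
    rw [pderivT, hfun]
    rw [h2.deriv]
    rw [hEdef]; ring
  -- y-derivative
  have hXd : HasDerivAt (fun y' : ℝ => Complex.exp (-(y':ℂ)^2/2)) (-(y:ℂ) * X) y := by
    have h1 : HasDerivAt (fun w : ℂ => Complex.exp (-w^2/2))
        (Complex.exp (-(y:ℂ)^2/2) * (-(2*(y:ℂ))/2)) (y:ℂ) := by
      have := (((hasDerivAt_pow 2 ((y:ℂ))).neg).div_const 2).cexp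
      simpa using this
    have := h1.comp_ofReal
    convert this using 1
    rw [hXdef]; ring
  have hYd : HasDerivAt (fun y' : ℝ => ((y':ℂ))^l) ((l:ℂ) * (y:ℂ)^(l-1)) y := by
    have := (hasDerivAt_pow l ((y:ℂ))).comp_ofReal
    simpa using this
  have hP : HasDerivAt (fun y' : ℝ => Complex.exp (-(y':ℂ)^2/2) * ((y':ℂ))^l
        * oneFone a b ((y':ℂ)^2))
      ((-(y:ℂ) * X * Y + X * ((l:ℂ) * (y:ℂ)^(l-1))) * Φ + X * Y * D) y := by
    have h0 := (hXd.mul hYd).mul (hasDerivAt_oneFone_sq a l y)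
    convert h0 using 1
    rfl
    rfl
    rfl
  have hY : pderivY (Psi m l) θ y
      = E * ((-(y:ℂ) * X * Y + X * ((l:ℂ) * (y:ℂ)^(l-1))) * Φ + X * Y * D) := by
    have hfun : (fun y' : ℝ => Psi m l θ y')
        = fun y' : ℝ => E * (Complex.exp (-(y':ℂ)^2/2) * ((y':ℂ))^l
            * oneFone a b ((y':ℂ)^2)) := by
      funext y'
      rw [Psi, hEdef, hadef, hbdef]
      ring
    rw [pderivY, hfun, (hP.const_mul E).deriv]
  -- values of Psi
  have hPsi : Psi m l θ y = E * (X * Y * Φ) := by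
    rw [Psi, hEdef, hXdef, hYdef, hPhidef, hadef, hbdef, hzdef]; ring
  have hPsi4 : Psi (m+4) l θ y = (E * e2) * (X * Y * G) := by
    rw [Psi]
    push_cast
    rw [show -I * ((m:ℂ) + 4) * (θ:ℂ) / 2 = -I * (m:ℂ) * (θ:ℂ) / 2 + -2 * I * (θ:ℂ) by ring,
      Complex.exp_add,
      show (1 + 2 * (l : ℂ) - ((m:ℂ) + 4)) / 4 = a - 1 by rw [hadef]; ring]
    rw [hEdef, he2def, hXdef, hYdef, hGdef, hbdef, hzdef]
    ring
  -- auxiliary algebraic facts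
  have hR1 : (y:ℂ) * D = 2 * F1 := by
    rw [hDdef, hF1def, hbdef, hzdef]
    exact y_mul_D a l y
  have hR2 : F1 = z * Φ - (b - a) * Φ + (b - a) * G := by
    rw [hF1def, hPhidef, hGdef, oneFone_eq, oneFone_eq, hbdef]
    exact tsum_F1 a l z
  have hR3 : (y:ℂ) * ((l:ℂ) * (y:ℂ)^(l-1)) = (l:ℂ) * (y:ℂ)^l := by
    cases l with
    | zero => simp
    | succ k =>
      simp only [Nat.add_sub_cancel]
      push_cast
      ring
  -- final algebra
  rw [etaPlus, hT, hY, hPsi, hPsi4]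
  rw [hbdef, hadef] at hR2
  rw [hzdef] at hR2
  linear_combination (-(1/2 : ℂ) * e2 * E * X * Y) * hR1
    + (-e2 * E * X * Y) * hR2
    + (-(1/2 : ℂ) * e2 * E * X * Φ) * hR3
    + (e2 * Y * E * X * Φ * (m:ℂ) / 4) * Complex.I_sq

/-- `η⁺ Ψ_{m,l} = -((2l+1+m)/4) Ψ_{m+4,l}`; in particular `η⁺` annihilates the
highest weight vector `Ψ_{-(2l+1),l}(θ,y) = e^{i(2l+1)θ/2} e^{y²/2} y^l`. -/
theorem etaPlus_action (l : ℕ) (m : ℤ) :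
    (∀ θ y : ℝ,
      etaPlus (Psi m l) θ y
        = -((2 * (l : ℂ) + 1 + (m : ℂ)) / 4) * Psi (m + 4) l θ y) ∧
    (∀ θ y : ℝ, etaPlus (Psi (-(2 * (l : ℤ) + 1)) l) θ y = 0) ∧
    (∀ θ y : ℝ,
      Psi (-(2 * (l : ℤ) + 1)) l θ y
        = Complex.exp (I * (2 * (l : ℂ) + 1) * (θ : ℂ) / 2)
            * Complex.exp ((y : ℂ) ^ 2 / 2) * (y : ℂ) ^ l) := by
  refine ⟨fun θ y => etaPlus_eq l m θ y, fun θ y => ?_, fun θ y => Psi_hw l θ y⟩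
  rw [etaPlus_eq l (-(2 * (l:ℤ) + 1)) θ y]
  rw [show (2 * (l:ℂ) + 1 + ((-(2 * (l:ℤ) + 1) : ℤ) : ℂ)) = 0 by push_cast; ring]
  norm_num
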